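/- Let k be a commutative ring and let M be a k-module which is k-linearly isomorphic to the direct sum of countably infinitely many copies of itself (i.e., there is a k-linear isomorphism M ≅ ⨁_{i ∈ ℕ} M). Then for every sequence s_0, s_1, s_2, ... of k-module endomorphisms of M, there exist k-module endomorphisms x, y, z of M such that x ∘ y^n ∘ z = s_n for every natural number n (where y^n denotes the n-fold composite of y, and composition is the multiplication of the endomorphism algebra End_k(M)). -/
import Mathlib

/-- Let `M` be a `k`-module which is `k`-linearly isomorphic to
the direct sum of countably infinitely many copies of itself.  Then for every
sequence `s₀, s₁, …` of `k`-module endomorphisms of `M` there are endomorphisms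
`x, y, z` of `M` with `x * yⁿ * z = s n` for all `n` (multiplication in
`End_k(M)` being composition). -/
theorem endomorphisms_xyz
    (k : Type*) [CommRing k] (M : Type*) [AddCommGroup M] [Module k M]
    (e : M ≃ₗ[k] (ℕ →₀ M)) (s : ℕ → Module.End k M) :
    ∃ x y z : Module.End k M, ∀ n : ℕ, x * y ^ n * z = s n := by
  classical
  set y : Module.End k M :=
    e.symm.toLinearMap ∘ₗ Finsupp.lmapDomain M k (· + 1) ∘ₗ e.toLinearMap with hy
  refine ⟨Finsupp.lsum k s ∘ₗ e.toLinearMap, y,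
    e.symm.toLinearMap ∘ₗ Finsupp.lsingle 0, fun n => ?_⟩
  have key : ∀ n j (m : M),
      (y ^ n) (e.symm (Finsupp.single j m)) = e.symm (Finsupp.single (j + n) m) := by
    intro n
    induction n with
    | zero => intro j m; simp
    | succ n ih =>
      intro j m
      have hstep : y (e.symm (Finsupp.single j m)) = e.symm (Finsupp.single (j + 1) m) := by
        simp [hy, Finsupp.mapDomain_single]
      rw [pow_succ, Module.End.mul_apply, hstep, ih, add_assoc, add_comm 1 n]
  ext m
  simp only [Module.End.mul_apply, LinearMap.comp_apply, LinearEquiv.coe_coe,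
    Finsupp.lsingle_apply]
  rw [key n 0 m]
  simp
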